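/- Let ε ∈ (0,1), and let A and B be disjoint finite sets of items, each item i carrying a positive integer time interval T_i and a positive integer ordering quantity H_i. Suppose that lcm{T_i : i ∈ A} ≤ ε·min{T_i : i ∈ B}. Then OPT^disc(I_{A∪B}) ≥ OPT^disc(I_A) + (1 − 2ε)·OPT^disc(I_B), where I_S denotes the discrete inventory staggering instance consisting of the items of S. -/

import Mathlib

noncomputable def invLevel (T H : ℕ) (τ t : ℤ) : ℝ :=
  (H : ℝ) * (1 - (((t - τ) % (T : ℤ) : ℤ) : ℝ) / (T : ℝ))

noncomputable def totalInv {ι : Type*} [Fintype ι] (T H : ι → ℕ) (τ : ι → ℤ) (t : ℤ) : ℝ :=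
  ∑ i, invLevel (T i) (H i) (τ i) t

def cycleLen {ι : Type*} [Fintype ι] (T : ι → ℕ) : ℕ := Finset.univ.lcm T

noncomputable def Imax {ι : Type*} [Fintype ι] (T H : ι → ℕ) (τ : ι → ℤ) : ℝ :=
  sSup (totalInv T H τ '' Set.Ico (0 : ℤ) (cycleLen T : ℤ))

noncomputable def OPTdisc {ι : Type*} [Fintype ι] (T H : ι → ℕ) : ℝ :=
  sInf (Set.range (Imax T H))

lemma emod_mem_Ico {T : ℕ} (hT : 0 < T) (a : ℤ) : a % (T:ℤ) ∈ Set.Ico (0:ℤ) (T:ℤ) :=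
  ⟨Int.emod_nonneg a (by exact_mod_cast hT.ne'), Int.emod_lt_of_pos a (by exact_mod_cast hT)⟩

lemma invLevel_nonneg {T H : ℕ} (hT : 0 < T) (τ t : ℤ) : 0 ≤ invLevel T H τ t := by
  obtain ⟨h0, h1⟩ := emod_mem_Ico hT (t - τ)
  have hTpos : (0:ℝ) < T := by exact_mod_cast hT
  have h0' : (0:ℝ) ≤ (((t - τ) % (T:ℤ) : ℤ):ℝ) := by exact_mod_cast h0
  have h1' : (((t - τ) % (T:ℤ) : ℤ):ℝ) < (T:ℝ) := by exact_mod_cast h1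
  have : (((t - τ) % (T:ℤ) : ℤ):ℝ) / T ≤ 1 := by
    rw [div_le_one hTpos]; linarith
  exact mul_nonneg (Nat.cast_nonneg _) (by linarith)

lemma invLevel_period {T H : ℕ} (τ t k : ℤ) (h : (T:ℤ) ∣ k) :
    invLevel T H τ (t + k) = invLevel T H τ t := by
  obtain ⟨c, rfl⟩ := h
  unfold invLevel
  rw [show t + (T:ℤ) * c - τ = (t - τ) + (T:ℤ) * c by ring, Int.add_mul_emod_self_left]

lemma totalInv_nonneg {ι : Type*} [Fintype ι] {T H : ι → ℕ} (hT : ∀ i, 0 < T i)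
    (τ : ι → ℤ) (t : ℤ) : 0 ≤ totalInv T H τ t :=
  Finset.sum_nonneg fun i _ => invLevel_nonneg (hT i) _ _

lemma totalInv_period {ι : Type*} [Fintype ι] {T H : ι → ℕ} (τ : ι → ℤ) (t k : ℤ)
    (h : ∀ i, (T i:ℤ) ∣ k) : totalInv T H τ (t + k) = totalInv T H τ t :=
  Finset.sum_congr rfl fun i _ => invLevel_period _ _ _ (h i)

lemma cycleLen_pos {ι : Type*} [Fintype ι] {T : ι → ℕ} (hT : ∀ i, 0 < T i) :
    0 < cycleLen T := by
  rw [Nat.pos_iff_ne_zero, cycleLen, Ne, Finset.lcm_eq_zero_iff]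
  rintro ⟨i, -, hi⟩
  exact (hT i).ne hi.symm

lemma totalInv_le_Imax {ι : Type*} [Fintype ι] {T H : ι → ℕ} (hT : ∀ i, 0 < T i)
    (τ : ι → ℤ) (t : ℤ) : totalInv T H τ t ≤ Imax T H τ := by
  have hΛ : 0 < cycleLen T := cycleLen_pos hT
  set Λ : ℤ := (cycleLen T : ℤ) with hΛdef
  have key : totalInv T H τ t = totalInv T H τ (t % Λ) := by
    have h1 : t = t % Λ + Λ * (t / Λ) := by
      rw [add_comm]; exact (Int.mul_ediv_add_emod t Λ).symm
    calc totalInv T H τ t = totalInv T H τ (t % Λ + Λ * (t / Λ)) := by rw [← h1]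
    _ = totalInv T H τ (t % Λ) := totalInv_period τ _ _ (fun i =>
        dvd_mul_of_dvd_left (Int.natCast_dvd_natCast.2 (Finset.dvd_lcm (Finset.mem_univ i))) _)
  rw [key]
  exact le_csSup ((Set.finite_Ico _ _).image _).bddAbove
    ⟨t % Λ, emod_mem_Ico hΛ t, rfl⟩

lemma exists_Imax_attained {ι : Type*} [Fintype ι] {T H : ι → ℕ} (hT : ∀ i, 0 < T i)
    (τ : ι → ℤ) : ∃ t, totalInv T H τ t = Imax T H τ := by
  have hΛ : 0 < cycleLen T := cycleLen_pos hT
  have hne : (totalInv T H τ '' Set.Ico (0:ℤ) (cycleLen T : ℤ)).Nonempty :=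
    ⟨totalInv T H τ 0, 0, ⟨le_refl _, by exact_mod_cast hΛ⟩, rfl⟩
  have := hne.csSup_mem ((Set.finite_Ico _ _).image _)
  obtain ⟨t, -, ht⟩ := this
  exact ⟨t, ht⟩

lemma Imax_nonneg {ι : Type*} [Fintype ι] {T H : ι → ℕ} (hT : ∀ i, 0 < T i)
    (τ : ι → ℤ) : 0 ≤ Imax T H τ :=
  le_trans (totalInv_nonneg hT τ 0) (totalInv_le_Imax hT τ 0)

lemma OPTdisc_le_Imax {ι : Type*} [Fintype ι] {T H : ι → ℕ} (hT : ∀ i, 0 < T i)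
    (τ : ι → ℤ) : OPTdisc T H ≤ Imax T H τ :=
  csInf_le ⟨0, by rintro x ⟨τ', rfl⟩; exact Imax_nonneg hT τ'⟩ ⟨τ, rfl⟩

lemma invLevel_drop {T H : ℕ} (hT : 0 < T) (τ tB : ℤ) {d : ℤ} (hd0 : 0 ≤ d) (hdT : d < (T:ℤ)) :
    invLevel T H τ tB - (H:ℝ) * (d:ℝ) / (T:ℝ) ≤ invLevel T H τ (tB + d) := by
  have hTz : (0:ℤ) < (T:ℤ) := by exact_mod_cast hT
  have hTr : (0:ℝ) < (T:ℝ) := by exact_mod_cast hT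
  set a := (tB - τ) % (T:ℤ) with ha
  obtain ⟨ha0, ha1⟩ := emod_mem_Ico hT (tB - τ)
  have hb : (tB + d - τ) % (T:ℤ) = (a + d) % (T:ℤ) := by
    rw [ha, Int.emod_add_emod]
    congr 1; ring
  unfold invLevel
  rw [hb]
  rcases lt_or_ge (a + d) (T:ℤ) with h | h
  · rw [Int.emod_eq_of_lt (by linarith) h]
    apply le_of_eq
    push_cast
    field_simp
    simp only [← ha]
    ring
  · have heq : (a + d) % (T:ℤ) = a + d - T := by
      rw [show a + d - (T:ℤ) = a + d + (T:ℤ) * (-1) by ring] at *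
      rw [← Int.add_mul_emod_self_left (a := a + d) (b := (T:ℤ)) (c := -1)]
      exact Int.emod_eq_of_lt (by linarith) (by linarith)
    rw [heq]
    have hHr : (0:ℝ) ≤ (H:ℝ) := Nat.cast_nonneg _
    have key : (H:ℝ) * (1 - ((a + d - (T:ℤ) : ℤ):ℝ) / T)
        = (H:ℝ) * (1 - ((a:ℝ) + (d:ℝ)) / T) + H := by
      push_cast
      field_simp
      ring
    rw [key]
    have : (H:ℝ) * (1 - ((a:ℝ) + (d:ℝ)) / T) = (H:ℝ) * (1 - (a:ℝ)/T) - (H:ℝ)*(d:ℝ)/T := by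
      field_simp; ring
    linarith

open Finset in
lemma sum_emod_shift {T : ℕ} (hT : 0 < T) (c : ℤ) (f : ℤ → ℝ) :
    ∑ t ∈ Finset.Ico (0:ℤ) (T:ℤ), f ((t + c) % (T:ℤ))
      = ∑ t ∈ Finset.Ico (0:ℤ) (T:ℤ), f (t % (T:ℤ)) := by
  have hTz : (0:ℤ) < (T:ℤ) := by exact_mod_cast hT
  refine Finset.sum_nbij' (fun t => (t + c) % (T:ℤ)) (fun t => (t - c) % (T:ℤ)) ?_ ?_ ?_ ?_ ?_
  · intro t _
    simpa using emod_mem_Ico hT (t + c)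
  · intro t _
    simpa using emod_mem_Ico hT (t - c)
  · intro t ht
    simp only [Finset.mem_Ico] at ht
    show ((t + c) % (T:ℤ) - c) % (T:ℤ) = t
    rw [Int.sub_emod, Int.emod_emod_of_dvd _ dvd_rfl, ← Int.sub_emod]
    simp only [add_sub_cancel_right]
    exact Int.emod_eq_of_lt ht.1 ht.2
  · intro t ht
    simp only [Finset.mem_Ico] at ht
    show ((t - c) % (T:ℤ) + c) % (T:ℤ) = t
    rw [Int.add_emod, Int.emod_emod_of_dvd _ dvd_rfl, ← Int.add_emod]
    simp only [sub_add_cancel]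
    exact Int.emod_eq_of_lt ht.1 ht.2
  · intro t _
    show f ((t + c) % (T:ℤ)) = f (((t + c) % (T:ℤ)) % (T:ℤ))
    rw [Int.emod_emod_of_dvd _ dvd_rfl]

lemma sum_window {T H : ℕ} (hT : 0 < T) (τ a : ℤ) :
    ∑ t ∈ Finset.Ico a (a + (T:ℤ)), invLevel T H τ t
      = ∑ t ∈ Finset.Ico (0:ℤ) (T:ℤ), (H:ℝ) * (1 - ((t:ℤ):ℝ)/(T:ℝ)) := by
  have hmap : (Finset.Ico (0:ℤ) (T:ℤ)).map (addLeftEmbedding a) = Finset.Ico a (a + (T:ℤ)) := by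
    rw [Finset.map_add_left_Ico]; simp
  rw [← hmap, Finset.sum_map]
  have h1 : ∀ t : ℤ, invLevel T H τ (addLeftEmbedding a t)
      = (H:ℝ) * (1 - (((t + (a - τ)) % (T:ℤ) : ℤ):ℝ)/(T:ℝ)) := by
    intro t
    simp only [addLeftEmbedding_apply, invLevel]
    congr 3
    ring
  rw [Finset.sum_congr rfl fun t _ => h1 t,
    sum_emod_shift hT (a - τ) (fun r : ℤ => (H:ℝ) * (1 - (r:ℝ)/(T:ℝ)))]
  refine Finset.sum_congr rfl fun t ht => ?_
  simp only [Finset.mem_Ico] at ht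
  rw [Int.emod_eq_of_lt ht.1 ht.2]

lemma sum_Ico_int_eq_range (g : ℤ → ℝ) (n : ℕ) :
    ∑ t ∈ Finset.Ico (0:ℤ) (n:ℤ), g t = ∑ k ∈ Finset.range n, g (k:ℤ) := by
  induction n with
  | zero => simp
  | succ n ih =>
    have : Finset.Ico (0:ℤ) ((n:ℤ)+1) = insert (n:ℤ) (Finset.Ico (0:ℤ) (n:ℤ)) := by
      ext x; simp only [Finset.mem_Ico, Finset.mem_insert]; omega
    rw [show ((n+1:ℕ):ℤ) = (n:ℤ)+1 by push_cast; ring, this,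
      Finset.sum_insert (by simp), Finset.sum_range_succ, ih]
    ring

lemma base_sum_ge {T H : ℕ} (hT : 0 < T) :
    (T:ℝ) * (H:ℝ) / 2 ≤ ∑ t ∈ Finset.Ico (0:ℤ) (T:ℤ), (H:ℝ) * (1 - ((t:ℤ):ℝ)/(T:ℝ)) := by
  have hTr : (0:ℝ) < (T:ℝ) := by exact_mod_cast hT
  rw [sum_Ico_int_eq_range]
  have gauss : (∑ k ∈ Finset.range T, ((k:ℤ):ℝ)) = (T:ℝ) * ((T:ℝ) - 1) / 2 := by
    have h := Finset.sum_range_id_mul_two T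
    have h1 : 1 ≤ T := hT
    have h2 := congrArg (fun n : ℕ => (n:ℝ)) h
    push_cast [Nat.cast_sub h1] at h2
    have h3 : (∑ k ∈ Finset.range T, ((k:ℤ):ℝ)) = ((∑ i ∈ Finset.range T, i : ℕ):ℝ) := by
      push_cast; rfl
    have h4 : ((∑ i ∈ Finset.range T, i : ℕ):ℝ) = ∑ x ∈ Finset.range T, (x:ℝ) := by
      push_cast; rfl
    rw [h3, h4]
    linarith
  have expand : ∑ k ∈ Finset.range T, (H:ℝ) * (1 - ((k:ℤ):ℝ)/(T:ℝ))
      = (T:ℝ)*(H:ℝ) - (H:ℝ)/(T:ℝ) * ((T:ℝ)*((T:ℝ)-1)/2) := by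
    simp only [mul_one_sub]
    rw [Finset.sum_sub_distrib, Finset.sum_const, Finset.card_range, nsmul_eq_mul]
    have hterm : ∀ k : ℕ, (H:ℝ) * (((k:ℤ):ℝ)/(T:ℝ)) = (H:ℝ)/(T:ℝ) * ((k:ℤ):ℝ) :=
      fun k => by ring
    rw [Finset.sum_congr rfl fun k _ => hterm k, ← Finset.mul_sum, gauss]
  rw [expand]
  have hH : (0:ℝ) ≤ (H:ℝ) := Nat.cast_nonneg _
  have heq : (T:ℝ)*(H:ℝ) - (H:ℝ)/(T:ℝ)*((T:ℝ)*((T:ℝ)-1)/2) = (H:ℝ)*((T:ℝ)+1)/2 := by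
    field_simp
    ring
  rw [heq]
  nlinarith

lemma sum_blocks {T H : ℕ} (hT : 0 < T) (τ : ℤ) (m : ℕ) :
    ((T:ℝ) * (m:ℝ)) * (H:ℝ) / 2 ≤ ∑ t ∈ Finset.Ico (0:ℤ) ((T:ℤ) * (m:ℤ)), invLevel T H τ t := by
  induction m with
  | zero => simp
  | succ m ih =>
    have hTz : (0:ℤ) ≤ (T:ℤ) := by positivity
    have h1 : (0:ℤ) ≤ (T:ℤ) * (m:ℤ) := by positivity
    have h2 : (T:ℤ) * ((m:ℤ)+1) = (T:ℤ) * (m:ℤ) + (T:ℤ) := by ring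
    have hsplit : Finset.Ico (0:ℤ) ((T:ℤ) * (m:ℤ) + (T:ℤ))
        = Finset.Ico (0:ℤ) ((T:ℤ) * (m:ℤ)) ∪ Finset.Ico ((T:ℤ)*(m:ℤ)) ((T:ℤ)*(m:ℤ) + (T:ℤ)) :=
      (Finset.Ico_union_Ico_eq_Ico h1 (by linarith)).symm
    rw [show ((m+1:ℕ):ℤ) = (m:ℤ)+1 by push_cast; ring, h2, hsplit,
      Finset.sum_union (Finset.Ico_disjoint_Ico_consecutive _ _ _)]
    have hwin : (T:ℝ) * (H:ℝ) / 2 ≤ ∑ t ∈ Finset.Ico ((T:ℤ)*(m:ℤ)) ((T:ℤ)*(m:ℤ) + (T:ℤ)),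
        invLevel T H τ t := by
      rw [sum_window hT]
      exact base_sum_ge hT
    push_cast
    have := ih
    push_cast at this
    linarith

lemma half_le_Imax {ι : Type*} [Fintype ι] {T H : ι → ℕ} (hT : ∀ i, 0 < T i) (τ : ι → ℤ) :
    (∑ i, (H i : ℝ)) / 2 ≤ Imax T H τ := by
  have hΛ : 0 < cycleLen T := cycleLen_pos hT
  set Λ := cycleLen T with hΛdef
  have hΛr : (0:ℝ) < (Λ:ℝ) := by exact_mod_cast hΛ
  have per : ∀ i, (Λ:ℝ) * (H i:ℝ)/2 ≤ ∑ t ∈ Finset.Ico (0:ℤ) (Λ:ℤ), invLevel (T i) (H i) (τ i) t := by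
    intro i
    have hdvd : T i ∣ Λ := Finset.dvd_lcm (Finset.mem_univ i)
    obtain ⟨m, hm⟩ := hdvd
    have := sum_blocks (H := H i) (hT i) (τ i) m
    rw [show ((Λ:ℤ)) = (T i:ℤ) * (m:ℤ) by exact_mod_cast congrArg (Nat.cast : ℕ → ℤ) hm]
    calc (Λ:ℝ) * (H i:ℝ)/2 = ((T i:ℝ) * (m:ℝ)) * (H i:ℝ)/2 := by
          rw [show (Λ:ℝ) = (T i:ℝ) * (m:ℝ) by exact_mod_cast congrArg (Nat.cast : ℕ → ℝ) hm]
    _ ≤ _ := this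
  have htot : (Λ:ℝ) * (∑ i, (H i:ℝ))/2 ≤ ∑ t ∈ Finset.Ico (0:ℤ) (Λ:ℤ), totalInv T H τ t := by
    rw [show (∑ t ∈ Finset.Ico (0:ℤ) (Λ:ℤ), totalInv T H τ t)
        = ∑ i, ∑ t ∈ Finset.Ico (0:ℤ) (Λ:ℤ), invLevel (T i) (H i) (τ i) t from Finset.sum_comm]
    calc (Λ:ℝ) * (∑ i, (H i:ℝ))/2 = ∑ i, (Λ:ℝ) * (H i:ℝ)/2 := by
          rw [Finset.mul_sum, Finset.sum_div]
    _ ≤ _ := Finset.sum_le_sum fun i _ => per i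
  have hcard : (Finset.Ico (0:ℤ) (Λ:ℤ)).card = Λ := by
    rw [Int.card_Ico]
    simp
  have hub : ∑ t ∈ Finset.Ico (0:ℤ) (Λ:ℤ), totalInv T H τ t ≤ (Λ:ℝ) * Imax T H τ := by
    calc ∑ t ∈ Finset.Ico (0:ℤ) (Λ:ℤ), totalInv T H τ t
        ≤ ∑ _t ∈ Finset.Ico (0:ℤ) (Λ:ℤ), Imax T H τ :=
          Finset.sum_le_sum fun t _ => totalInv_le_Imax hT τ t
    _ = (Λ:ℝ) * Imax T H τ := by rw [Finset.sum_const, hcard, nsmul_eq_mul]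
  have h2 := le_trans htot hub
  have h3 : (Λ:ℝ) * ((∑ i, (H i:ℝ))/2) ≤ (Λ:ℝ) * Imax T H τ := by linarith
  exact (mul_le_mul_iff_right₀ hΛr).mp h3

/-- Near-additivity under ε-shortness: if `lcm{T_i : i ∈ A} ≤ ε·min{T_i : i ∈ B}`
for disjoint item sets `A` and `B`, then
`OPT^disc(I_{A∪B}) ≥ OPT^disc(I_A) + (1−2ε)·OPT^disc(I_B)`. -/
theorem stmt16 {ιA ιB : Type} [Fintype ιA] [Fintype ιB] [Nonempty ιB]
    (TA HA : ιA → ℕ) (TB HB : ιB → ℕ)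
    (hTA : ∀ i, 0 < TA i) (hHA : ∀ i, 0 < HA i)
    (hTB : ∀ i, 0 < TB i) (hHB : ∀ i, 0 < HB i)
    (ε : ℝ) (hε : ε ∈ Set.Ioo (0 : ℝ) 1)
    (hshort : ∀ j : ιB, ((Finset.univ.lcm TA : ℕ) : ℝ) ≤ ε * (TB j : ℝ)) :
    OPTdisc TA HA + (1 - 2 * ε) * OPTdisc TB HB
      ≤ OPTdisc (Sum.elim TA TB) (Sum.elim HA HB) := by
  obtain ⟨hε0, hε1⟩ := hε
  have hTjoint : ∀ i : ιA ⊕ ιB, 0 < Sum.elim TA TB i := by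
    intro i; cases i with
    | inl a => exact hTA a
    | inr b => exact hTB b
  set ΛA : ℕ := Finset.univ.lcm TA with hΛAdef
  have hΛA : 0 < ΛA := cycleLen_pos hTA
  have hΛAz : (0:ℤ) < (ΛA:ℤ) := by exact_mod_cast hΛA
  set Hsum : ℝ := ∑ j, (HB j : ℝ) with hHsum
  have hHsumhalf : Hsum / 2 ≤ OPTdisc TB HB := by
    apply le_csInf (Set.range_nonempty _)
    rintro x ⟨τ', rfl⟩
    exact half_le_Imax hTB τ'
  apply le_csInf (Set.range_nonempty _)
  rintro x ⟨τ, rfl⟩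
  set τA : ιA → ℤ := fun i => τ (Sum.inl i) with hτA
  set τB : ιB → ℤ := fun j => τ (Sum.inr j) with hτB
  obtain ⟨tB, htB⟩ := exists_Imax_attained (H := HB) hTB τB
  obtain ⟨t0, ht0⟩ := exists_Imax_attained hTA τA
  set d : ℤ := (t0 - tB) % (ΛA:ℤ) with hd
  have hd0 : 0 ≤ d := Int.emod_nonneg _ hΛAz.ne'
  have hdlt : d < (ΛA:ℤ) := Int.emod_lt_of_pos _ hΛAz
  set tA : ℤ := tB + d with htAdef
  have hdvdA : ∀ i, (TA i:ℤ) ∣ (tA - t0) := by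
    intro i
    have h1 : (ΛA:ℤ) ∣ (tA - t0) :=
      ⟨-((t0 - tB) / (ΛA:ℤ)), by rw [htAdef, hd, Int.emod_def]; ring⟩
    exact dvd_trans (Int.natCast_dvd_natCast.2 (Finset.dvd_lcm (Finset.mem_univ i))) h1
  have hAeq : totalInv TA HA τA tA = Imax TA HA τA := by
    rw [show tA = t0 + (tA - t0) by ring, totalInv_period τA t0 _ hdvdA, ht0]
  have hj : ∀ j : ιB, invLevel (TB j) (HB j) (τB j) tB - ε * (HB j:ℝ)
      ≤ invLevel (TB j) (HB j) (τB j) tA := by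
    intro j
    have hTj : (0:ℝ) < (TB j:ℝ) := by exact_mod_cast hTB j
    have hΛTj : (ΛA:ℝ) ≤ ε * (TB j:ℝ) := hshort j
    have hdTj : d < ((TB j : ℕ):ℤ) := by
      have hr : (ΛA:ℝ) < (TB j:ℝ) := lt_of_le_of_lt hΛTj (by nlinarith)
      have hz : (ΛA:ℤ) < ((TB j : ℕ):ℤ) := by exact_mod_cast hr
      linarith
    have hdrop := invLevel_drop (H := HB j) (hTB j) (τB j) tB hd0 hdTj
    have hdr : (d:ℝ) ≤ (ΛA:ℝ) := by exact_mod_cast hdlt.le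
    have hfrac : (HB j:ℝ) * (d:ℝ) / (TB j:ℝ) ≤ ε * (HB j:ℝ) := by
      rw [div_le_iff₀ hTj]
      have hH0 : (0:ℝ) ≤ (HB j:ℝ) := Nat.cast_nonneg _
      nlinarith
    linarith
  have hBlow : Imax TB HB τB - ε * Hsum ≤ totalInv TB HB τB tA := by
    rw [← htB]
    have hsum := Finset.sum_le_sum (s := Finset.univ) fun j _ => hj j
    rw [Finset.sum_sub_distrib, ← Finset.mul_sum] at hsum
    exact hsum
  have hsplitA : totalInv (Sum.elim TA TB) (Sum.elim HA HB) τ tA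
      = totalInv TA HA τA tA + totalInv TB HB τB tA := by
    simp [totalInv, Fintype.sum_sum_type, hτA, hτB]
  have hjoint : Imax TA HA τA + Imax TB HB τB - ε * Hsum
      ≤ Imax (Sum.elim TA TB) (Sum.elim HA HB) τ := by
    have h1 := totalInv_le_Imax (H := Sum.elim HA HB) hTjoint τ tA
    rw [hsplitA, hAeq] at h1
    linarith
  have hOA : OPTdisc TA HA ≤ Imax TA HA τA := OPTdisc_le_Imax hTA τA
  have hOB : OPTdisc TB HB ≤ Imax TB HB τB := OPTdisc_le_Imax hTB τB
  have hεH : ε * Hsum ≤ 2 * ε * OPTdisc TB HB := by nlinarith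
  have hOB0 : 0 ≤ OPTdisc TB HB := by
    have h0 : 0 ≤ Hsum := Finset.sum_nonneg fun j _ => Nat.cast_nonneg _
    linarith
  nlinarith [hjoint, hOA, hOB, hεH]
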